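/- Let V be a finite-dimensional real normed vector space, W ≤ V a subspace, and p : V → V/(W ∩ ker ψ) the quotient map, where ψ is a linear functional with W ⊄ ker ψ. Then there exists c > 1 such that for all R > 0 and every nonzero u ∈ W with ψ(u) > 0: {v ∈ V : dist(p(v), ℝ·p(u)) < R/c} ⊆ {v ∈ V : dist(v, W) < R} ⊆ {v ∈ V : dist(p(v), ℝ·p(u)) < cR}, where distances in the quotient are taken with respect to any fixed norm there. -/

import Mathlib

/-- Norm comparison between the distance from a subspace `W` and the distance,
in the quotient `Q ≅ V/(W ∩ ker ψ)` (equipped with any fixed norm, modelled by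
a surjective linear map `p` with kernel `W ∩ ker ψ`), from the line through
`p(u)`: there is `c > 1` such that for all `R > 0` and all `u ∈ W` with
`ψ(u) > 0`,
`{v : dist(p v, ℝ·p u) < R/c} ⊆ {v : dist(v, W) < R} ⊆ {v : dist(p v, ℝ·p u) < cR}`. -/
theorem stmt_13 {V Q : Type*} [NormedAddCommGroup V] [NormedSpace ℝ V]
    [FiniteDimensional ℝ V] [NormedAddCommGroup Q] [NormedSpace ℝ Q]
    (ψ : V →ₗ[ℝ] ℝ) (W : Submodule ℝ V) (hW : ¬ W ≤ LinearMap.ker ψ)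
    (p : V →ₗ[ℝ] Q) (hsurj : Function.Surjective p)
    (hker : LinearMap.ker p = W ⊓ LinearMap.ker ψ) :
    ∃ c > (1:ℝ), ∀ R > (0:ℝ), ∀ u ∈ W, u ≠ 0 → 0 < ψ u →
      ({v : V | Metric.infDist (p v) (Submodule.span ℝ {p u} : Set Q) < R / c} ⊆
          {v : V | Metric.infDist v (W : Set V) < R}) ∧
      ({v : V | Metric.infDist v (W : Set V) < R} ⊆
          {v : V | Metric.infDist (p v) (Submodule.span ℝ {p u} : Set Q) < c * R}) := by
  haveI : FiniteDimensional ℝ Q := Module.Finite.of_surjective p hsurj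
  clear hW
  set K := LinearMap.ker p with hK
  haveI : IsClosed ((K : Submodule ℝ V) : Set V) := Submodule.closed_of_finiteDimensional _
  -- the inverse of the induced equiv (V ⧸ K) ≃ Q
  let e : (V ⧸ K) ≃ₗ[ℝ] Q := p.quotKerEquivOfSurjective hsurj
  let g : Q →ₗ[ℝ] (V ⧸ K) := e.symm.toLinearMap
  let gc : Q →L[ℝ] (V ⧸ K) := LinearMap.toContinuousLinearMap g
  let pc : V →L[ℝ] Q := LinearMap.toContinuousLinearMap p
  set C₁ : ℝ := ‖gc‖ + 1 with hC₁def
  set C₂ : ℝ := ‖pc‖ + 1 with hC₂def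
  have hC₁pos : 0 < C₁ := by positivity
  have hC₂pos : 0 < C₂ := by positivity
  set c : ℝ := C₁ + C₂ with hcdef
  have hc1 : (1:ℝ) < c := by
    have := norm_nonneg gc; have := norm_nonneg pc; simp only [hcdef, hC₁def, hC₂def]; linarith
  have hcpos : (0:ℝ) < c := by linarith
  -- key bound: infDist from the kernel is controlled by the norm of the image
  have key1 : ∀ x : V, Metric.infDist x (K : Set V) ≤ C₁ * ‖p x‖ := by
    intro x
    have hmk : ‖(Submodule.Quotient.mk x : V ⧸ K)‖ = Metric.infDist x (K : Set V) :=
      QuotientAddGroup.norm_mk (S := K.toAddSubgroup) x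
    have hgp : g (p x) = Submodule.Quotient.mk x := by
      have : e (Submodule.Quotient.mk x) = p x := rfl
      simpa [g, ← this] using e.symm_apply_apply (Submodule.Quotient.mk x)
    calc Metric.infDist x (K : Set V) = ‖g (p x)‖ := by rw [hgp, hmk]
      _ ≤ ‖gc‖ * ‖p x‖ := gc.le_opNorm (p x)
      _ ≤ C₁ * ‖p x‖ := by
          have := norm_nonneg (p x); nlinarith [norm_nonneg gc]
  have key2 : ∀ x : V, ‖p x‖ ≤ C₂ * ‖x‖ := by
    intro x
    calc ‖p x‖ ≤ ‖pc‖ * ‖x‖ := pc.le_opNorm x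
      _ ≤ C₂ * ‖x‖ := by have := norm_nonneg x; nlinarith [norm_nonneg pc]
  refine ⟨c, hc1, ?_⟩
  intro R hR u huW hu0 hψu
  have hkerW : K ≤ W := hker ▸ inf_le_left
  -- the span of p u equals the image of W
  have hspan : (Submodule.span ℝ {p u} : Submodule ℝ Q) = W.map p := by
    apply le_antisymm
    · rw [Submodule.span_le, Set.singleton_subset_iff]
      exact ⟨u, huW, rfl⟩
    · rintro - ⟨w, hwW, rfl⟩
      have hmem : w - (ψ w / ψ u) • u ∈ K := by
        show w - (ψ w / ψ u) • u ∈ K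
        rw [hker, Submodule.mem_inf]
        refine ⟨W.sub_mem hwW (W.smul_mem _ huW), ?_⟩
        rw [LinearMap.mem_ker, map_sub, map_smul, smul_eq_mul]
        field_simp
        ring
      have : p w = (ψ w / ψ u) • p u := by
        have := (LinearMap.mem_ker).mp hmem
        rw [map_sub, map_smul, sub_eq_zero] at this
        exact this
      rw [this]
      exact Submodule.smul_mem _ _ (Submodule.mem_span_singleton_self _)
  set L : Set Q := ((Submodule.span ℝ {p u} : Submodule ℝ Q) : Set Q) with hLdef
  have hLne : L.Nonempty := ⟨0, Submodule.zero_mem _⟩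
  have hWne : (W : Set V).Nonempty := ⟨0, Submodule.zero_mem _⟩
  constructor
  · intro v hv
    simp only [Set.mem_setOf_eq] at hv ⊢
    obtain ⟨y, hyL, hy⟩ := (Metric.infDist_lt_iff hLne).mp hv
    rw [hLdef] at hyL
    rw [SetLike.mem_coe, hspan] at hyL
    obtain ⟨w, hwW, rfl⟩ := hyL
    have h1 : Metric.infDist v (W : Set V) ≤ Metric.infDist (v - w) (K : Set V) := by
      refine le_of_not_gt fun hlt => ?_
      obtain ⟨z, hzK, hz⟩ :=
        (Metric.infDist_lt_iff ⟨0, Submodule.zero_mem _⟩).mp hlt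
      have : Metric.infDist v (W : Set V) ≤ dist v (w + z) :=
        Metric.infDist_le_dist_of_mem (W.add_mem hwW (hkerW hzK))
      rw [dist_eq_norm] at hz this
      have heq : v - (w + z) = v - w - z := by abel
      rw [heq] at this
      linarith
    have h2 : C₁ * ‖p (v - w)‖ < R := by
      have : ‖p (v - w)‖ = dist (p v) (p w) := by rw [dist_eq_norm, map_sub]
      rw [this]
      have hlt : C₁ * dist (p v) (p w) < C₁ * (R / c) :=
        mul_lt_mul_of_pos_left hy hC₁pos
      have hle : C₁ * (R / c) ≤ R := by
        rw [mul_div_assoc', div_le_iff₀ hcpos]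
        nlinarith [mul_pos hR hC₂pos]
      exact lt_of_lt_of_le hlt hle
    calc Metric.infDist v (W : Set V) ≤ Metric.infDist (v - w) (K : Set V) := h1
      _ ≤ C₁ * ‖p (v - w)‖ := key1 _
      _ < R := h2
  · intro v hv
    simp only [Set.mem_setOf_eq] at hv ⊢
    have h2 : Metric.infDist (p v) L ≤ C₂ * Metric.infDist v (W : Set V) := by
      rw [← div_le_iff₀' hC₂pos]
      refine le_of_not_gt fun hlt => ?_
      obtain ⟨w, hwW, hw⟩ := (Metric.infDist_lt_iff hWne).mp hlt
      have hmem : p w ∈ L := by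
        rw [hLdef]; rw [SetLike.mem_coe, hspan]; exact ⟨w, hwW, rfl⟩
      have : Metric.infDist (p v) L ≤ dist (p v) (p w) :=
        Metric.infDist_le_dist_of_mem hmem
      have hb : dist (p v) (p w) ≤ C₂ * dist v w := by
        rw [dist_eq_norm, dist_eq_norm, ← map_sub]
        exact key2 _
      have : Metric.infDist (p v) L ≤ C₂ * dist v w := le_trans this hb
      rw [lt_div_iff₀ hC₂pos] at hw
      nlinarith
    calc Metric.infDist (p v) L ≤ C₂ * Metric.infDist v (W : Set V) := h2
      _ < C₂ * R := mul_lt_mul_of_pos_left hv hC₂pos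
      _ ≤ c * R := by rw [hcdef]; nlinarith
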